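/- Let $F : \mathbb{R}^n \to \mathbb{R}$ be differentiable with $L$-Lipschitz gradient and bounded below by $F_*$. Let $0 < \gamma_2 < \gamma_1$ with $(\gamma_2/\gamma_1)^2 > 1 - \frac{1}{4M_2}$ and $\alpha < \frac{1}{4\gamma_2 L M_2}$. Let $(x_k)$ be TRish iterates with $\mathbb{E}_k[g_k] = \nabla F(x_k)$ and $\mathbb{E}_k[\|g_k\|^2] \le M_2\|\nabla F(x_k)\|^2$. Then for every $K \ge 1$, $\mathbb{E}\left[\frac{1}{K}\sum_{k=1}^K \|\nabla F(x_k)\|^2\right] \le \frac{4\gamma_2 (F(x_1) - F_*)}{K \alpha \gamma_1^2}$, and in particular the average expected squared gradient norm tends to $0$ as $K \to \infty$. -/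

import Mathlib

open MeasureTheory

local notation "⟪" x ", " y "⟫" => @inner ℝ _ _ x y

section aux

lemma coord_abs_le_norm {n : ℕ} (v : EuclideanSpace ℝ (Fin n)) (i : Fin n) : |v i| ≤ ‖v‖ := by
  rw [EuclideanSpace.norm_eq]
  have h1 : |v i| = Real.sqrt (|v i| ^ 2) := by
    rw [Real.sqrt_sq_eq_abs, abs_abs]
  rw [h1]
  apply Real.sqrt_le_sqrt
  exact Finset.single_le_sum (f := fun j => |v j| ^ 2) (fun j _ => by positivity)
    (Finset.mem_univ i)

lemma descent {E : Type*} [NormedAddCommGroup E] [InnerProductSpace ℝ E] [CompleteSpace E]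
    (F : E → ℝ) (F' : E → E) (L : ℝ) (hL : 0 ≤ L)
    (hgrad : ∀ y, HasGradientAt F (F' y) y)
    (hlip : LipschitzWith (Real.toNNReal L) F') (x p : E) :
    F (x + p) ≤ F x + ⟪F' x, p⟫ + L / 2 * ‖p‖ ^ 2 := by
  have hcont : Continuous F' := hlip.continuous
  have hφ' : ∀ t : ℝ, HasDerivAt (fun t : ℝ => F (x + t • p)) ⟪F' (x + t • p), p⟫ t := by
    intro t
    have h1 : HasDerivAt (fun t : ℝ => x + t • p) p t := by
      simpa using ((hasDerivAt_id t).smul_const p).const_add x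
    have h2 := (hgrad (x + t • p)).hasFDerivAt
    have := h2.comp_hasDerivAt t h1
    exact this
  have key : F (x + p) - F (x + (0:ℝ) • p) = ∫ t in (0:ℝ)..1, ⟪F' (x + t • p), p⟫ := by
    rw [show F (x + p) = F (x + (1:ℝ) • p) by simp]
    refine (intervalIntegral.integral_eq_sub_of_hasDerivAt (fun t _ => hφ' t) ?_).symm
    exact (Continuous.intervalIntegrable (by continuity) 0 1)
  have hbound : ∫ t in (0:ℝ)..1, ⟪F' (x + t • p), p⟫ ≤
      ∫ t in (0:ℝ)..1, (⟪F' x, p⟫ + L * t * ‖p‖ ^ 2) := by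
    apply intervalIntegral.integral_mono_on (by norm_num)
    · exact Continuous.intervalIntegrable (by continuity) 0 1
    · exact Continuous.intervalIntegrable (by continuity) 0 1
    · intro t ht
      rcases ht with ⟨ht0, ht1⟩
      have h1 : ⟪F' (x + t • p), p⟫ - ⟪F' x, p⟫ = ⟪F' (x + t • p) - F' x, p⟫ := by
        rw [inner_sub_left]
      have h2 : ⟪F' (x + t • p) - F' x, p⟫ ≤ ‖F' (x + t • p) - F' x‖ * ‖p‖ :=
        real_inner_le_norm _ _
      have h3 : ‖F' (x + t • p) - F' x‖ ≤ L * (t * ‖p‖) := by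
        have := hlip.dist_le_mul (x + t • p) x
        rw [dist_eq_norm, dist_eq_norm] at this
        calc ‖F' (x + t • p) - F' x‖ ≤ Real.toNNReal L * ‖x + t • p - x‖ := this
          _ = L * ‖t • p‖ := by rw [add_sub_cancel_left, Real.coe_toNNReal _ hL]
          _ = L * (|t| * ‖p‖) := by rw [norm_smul, Real.norm_eq_abs]
          _ = L * (t * ‖p‖) := by rw [abs_of_nonneg ht0]
      have hp : ‖p‖ * ‖p‖ = ‖p‖ ^ 2 := (sq ‖p‖).symm
      nlinarith [norm_nonneg p, mul_le_mul_of_nonneg_right h3 (norm_nonneg p)]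
  have hval : ∫ t in (0:ℝ)..1, (⟪F' x, p⟫ + L * t * ‖p‖ ^ 2) = ⟪F' x, p⟫ + L / 2 * ‖p‖ ^ 2 := by
    rw [intervalIntegral.integral_add (Continuous.intervalIntegrable (by continuity) 0 1)
      (Continuous.intervalIntegrable (by continuity) 0 1)]
    simp only [intervalIntegral.integral_const, mul_assoc]
    rw [intervalIntegral.integral_const_mul]
    have : ∫ t in (0:ℝ)..1, t * ‖p‖ ^ 2 = ‖p‖^2 / 2 := by
      rw [intervalIntegral.integral_mul_const, integral_id]
      ring
    rw [this]; simp; ring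
  simp only [zero_smul, add_zero] at key
  linarith [key, hbound, hval.le]

lemma ineq_step {E : Type*} [NormedAddCommGroup E] [InnerProductSpace ℝ E]
    (v w : E) (L α γ₁ γ₂ β : ℝ)
    (hL : 0 ≤ L) (hα : 0 < α) (hγ₂ : 0 < γ₂) (hγ : γ₂ < γ₁)
    (h1 : γ₂ * α ≤ β) (h2 : β ≤ γ₁ * α) :
    ⟪v, (-β) • w⟫ + L / 2 * ‖(-β) • w‖ ^ 2 ≤
      -(γ₂ * α) * ⟪v, w⟫ + ((γ₁ - γ₂) * α) * (‖v‖ * ‖w‖) + (L / 2 * (γ₁ * α) ^ 2) * ‖w‖ ^ 2 := by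
  have hin : ⟪v, (-β) • w⟫ = -β * ⟪v, w⟫ := real_inner_smul_right v w (-β)
  have hβ0 : 0 < β := lt_of_lt_of_le (by positivity) h1
  have hnm : ‖(-β) • w‖ ^ 2 = β ^ 2 * ‖w‖ ^ 2 := by
    rw [norm_smul, Real.norm_eq_abs, abs_neg, abs_of_pos hβ0]; ring
  rw [hin, hnm]
  have habs := abs_real_inner_le_norm v w
  rw [abs_le] at habs
  obtain ⟨hX2, hX1⟩ := habs
  have hN : 0 ≤ ‖v‖ * ‖w‖ := by positivity
  have hW : (0:ℝ) ≤ ‖w‖ ^ 2 := by positivity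
  nlinarith [mul_nonneg (sub_nonneg.2 h1) (by linarith : (0:ℝ) ≤ ⟪v, w⟫ + ‖v‖ * ‖w‖),
    mul_nonneg (sub_nonneg.2 h2) hN,
    mul_nonneg (mul_nonneg hL hW) (mul_nonneg (sub_nonneg.2 h2) (by linarith : (0:ℝ) ≤ γ₁ * α + β))]

end aux
set_option maxHeartbeats 1000000 in
theorem stmt_15 {n : ℕ} (F : EuclideanSpace ℝ (Fin n) → ℝ)
    (F' : EuclideanSpace ℝ (Fin n) → EuclideanSpace ℝ (Fin n))
    (L Fstar : ℝ) (hL : 0 < L)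
    (hgrad : ∀ y, HasGradientAt F (F' y) y)
    (hlip : LipschitzWith (Real.toNNReal L) F')
    (hbdd : ∀ y, Fstar ≤ F y)
    (α γ₁ γ₂ M₂ : ℝ) (hα : 0 < α) (hγ₂ : 0 < γ₂) (hγ : γ₂ < γ₁) (hM₂ : 0 < M₂)
    (hratio : (γ₂ / γ₁) ^ 2 > 1 - 1 / (4 * M₂))
    (hαlt : α < 1 / (4 * γ₂ * L * M₂))
    {Ω : Type*} {m0 : MeasurableSpace Ω} (μ : Measure Ω) [IsProbabilityMeasure μ]
    (ℱ : Filtration ℕ m0)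
    (x g : ℕ → Ω → EuclideanSpace ℝ (Fin n))
    (hadapted : Adapted ℱ x)
    (hstep : ∀ k ω, x (k + 1) ω = x k ω +
      (if ‖g k ω‖ < 1 / γ₁ then (-(γ₁ * α)) • g k ω
       else if ‖g k ω‖ ≤ 1 / γ₂ then (-(α / ‖g k ω‖)) • g k ω
       else (-(γ₂ * α)) • g k ω))
    (hintg : ∀ k, Integrable (g k) μ)
    (hintF : ∀ k, Integrable (fun ω => F (x k ω)) μ)
    (hint2 : ∀ k, Integrable (fun ω => ‖g k ω‖ ^ 2) μ)
    (hintgrad : ∀ k, Integrable (fun ω => ‖F' (x k ω)‖ ^ 2) μ)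
    (hunbiased : ∀ k, μ[g k | ℱ k] =ᵐ[μ] fun ω => F' (x k ω))
    (hvar : ∀ k, ∀ᵐ ω ∂μ,
      (μ[fun ω' => ‖g k ω'‖ ^ 2 | ℱ k]) ω ≤ M₂ * ‖F' (x k ω)‖ ^ 2) :
    (∀ K : ℕ, 1 ≤ K →
      (∫ ω, (1 / (K : ℝ)) * ∑ k ∈ Finset.Icc 1 K, ‖F' (x k ω)‖ ^ 2 ∂μ) ≤
        4 * γ₂ * ((∫ ω, F (x 1 ω) ∂μ) - Fstar) / ((K : ℝ) * α * γ₁ ^ 2)) ∧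
      Filter.Tendsto
        (fun K : ℕ => ∫ ω, (1 / (K : ℝ)) * ∑ k ∈ Finset.Icc 1 K, ‖F' (x k ω)‖ ^ 2 ∂μ)
        Filter.atTop (nhds 0) := by
  have hγ₁ : 0 < γ₁ := hγ₂.trans hγ
  set A : ℕ → ℝ := fun k => ∫ ω, ‖F' (x k ω)‖ ^ 2 ∂μ with hA
  set B : ℕ → ℝ := fun k => ∫ ω, ‖g k ω‖ ^ 2 ∂μ with hB
  set C : ℕ → ℝ := fun k => ∫ ω, ‖F' (x k ω)‖ * ‖g k ω‖ ∂μ with hC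
  set I : ℕ → ℝ := fun k => ∫ ω, ⟪F' (x k ω), g k ω⟫ ∂μ with hI
  set Φ : ℕ → ℝ := fun k => ∫ ω, F (x k ω) ∂μ with hΦ
  have hm : ∀ k, (ℱ k) ≤ m0 := fun k => ℱ.le k
  have hDm : ∀ k, StronglyMeasurable[ℱ k] (fun ω => F' (x k ω)) := fun k =>
    hlip.continuous.comp_stronglyMeasurable (hadapted k).stronglyMeasurable
  have hDm0 : ∀ k, AEStronglyMeasurable (fun ω => F' (x k ω)) μ := fun k =>
    ((hDm k).mono (hm k)).aestronglyMeasurable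
  have hgm : ∀ k, AEStronglyMeasurable (g k) μ := fun k => (hintg k).1
  have hbnd : ∀ (v w : EuclideanSpace ℝ (Fin n)), ‖v‖ * ‖w‖ ≤ (‖v‖ ^ 2 + ‖w‖ ^ 2) / 2 := by
    intro v w; nlinarith [sq_nonneg (‖v‖ - ‖w‖)]
  have hhalf : ∀ k, Integrable (fun ω => (‖F' (x k ω)‖ ^ 2 + ‖g k ω‖ ^ 2) / 2) μ := fun k =>
    ((hintgrad k).add (hint2 k)).div_const 2
  have hinner_int : ∀ k, Integrable (fun ω => ⟪F' (x k ω), g k ω⟫) μ := by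
    intro k
    refine Integrable.mono' (hhalf k) ((hDm0 k).inner (hgm k)) ?_
    filter_upwards with ω
    calc ‖⟪F' (x k ω), g k ω⟫‖ = |⟪F' (x k ω), g k ω⟫| := rfl
      _ ≤ ‖F' (x k ω)‖ * ‖g k ω‖ := abs_real_inner_le_norm _ _
      _ ≤ _ := hbnd _ _
  have hnormmul_int : ∀ k, Integrable (fun ω => ‖F' (x k ω)‖ * ‖g k ω‖) μ := by
    intro k
    refine Integrable.mono' (hhalf k) ((hDm0 k).norm.mul (hgm k).norm) ?_
    filter_upwards with ω
    rw [Real.norm_eq_abs, abs_of_nonneg (by positivity)]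
    exact hbnd _ _
  -- coordinate conditional expectations
  have hco : ∀ k (i : Fin n), (fun ω => F' (x k ω) i) =ᵐ[μ] μ[fun ω => g k ω i | ℱ k] := by
    intro k i
    have hproj : ∀ (f : Ω → EuclideanSpace ℝ (Fin n)), Integrable f μ →
        Integrable (fun ω => f ω i) μ := by
      intro f hf
      have := (EuclideanSpace.proj (𝕜 := ℝ) i).integrable_comp hf
      simpa using this
    have hDint : Integrable (fun ω => F' (x k ω)) μ := by
      refine Integrable.mono' (((integrable_const (1:ℝ)).add (hintgrad k)).div_const 2)
        (hDm0 k) ?_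
      filter_upwards with ω
      simp only [Pi.add_apply]
      nlinarith [norm_nonneg (F' (x k ω)), sq_nonneg (‖F' (x k ω)‖ - 1)]
    refine ae_eq_condExp_of_forall_setIntegral_eq (hm k) (hproj _ (hintg k))
      (fun s _ _ => (hproj _ hDint).integrableOn) ?_ ?_
    · intro s hs hμs
      have hset : ∫ ω in s, F' (x k ω) ∂μ = ∫ ω in s, g k ω ∂μ := by
        rw [← setIntegral_condExp (hm k) (hintg k) hs]
        refine setIntegral_congr_ae (hm k _ hs) ?_
        exact (hunbiased k).symm.mono fun ω h _ => h
      have h1 := (EuclideanSpace.proj (𝕜 := ℝ) i).integral_comp_comm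
        (hDint.integrableOn (s := s))
      have h2 := (EuclideanSpace.proj (𝕜 := ℝ) i).integral_comp_comm
        ((hintg k).integrableOn (s := s))
      simp only [PiLp.proj_apply] at h1 h2
      rw [h1, h2, hset]
    · exact ((EuclideanSpace.proj (𝕜 := ℝ) i).continuous.comp_stronglyMeasurable
        (hDm k)).aestronglyMeasurable
  -- tower property
  have htower : ∀ k, I k = A k := by
    intro k
    have hcoordm : ∀ i : Fin n, StronglyMeasurable[ℱ k] (fun ω => F' (x k ω) i) := fun i =>
      (EuclideanSpace.proj (𝕜 := ℝ) i).continuous.comp_stronglyMeasurable (hDm k)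
    have hprod_int : ∀ i : Fin n, Integrable (fun ω => F' (x k ω) i * g k ω i) μ := by
      intro i
      refine Integrable.mono' (hhalf k)
        (((hcoordm i).mono (hm k)).aestronglyMeasurable.mul
          ((EuclideanSpace.proj (𝕜 := ℝ) i).continuous.comp_aestronglyMeasurable (hgm k))) ?_
      filter_upwards with ω
      rw [Real.norm_eq_abs, abs_mul]
      calc |F' (x k ω) i| * |g k ω i| ≤ ‖F' (x k ω)‖ * ‖g k ω‖ :=
            mul_le_mul (coord_abs_le_norm _ i) (coord_abs_le_norm _ i)
              (abs_nonneg _) (norm_nonneg _)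
        _ ≤ _ := hbnd _ _
    have hgi_int : ∀ i : Fin n, Integrable (fun ω => g k ω i) μ := by
      intro i
      have := (EuclideanSpace.proj (𝕜 := ℝ) i).integrable_comp (hintg k)
      simpa using this
    have hsqprod_int : ∀ i : Fin n, Integrable (fun ω => F' (x k ω) i * F' (x k ω) i) μ := by
      intro i
      refine Integrable.mono' (hintgrad k)
        (((hcoordm i).mono (hm k)).aestronglyMeasurable.mul
          ((hcoordm i).mono (hm k)).aestronglyMeasurable) ?_
      filter_upwards with ω
      rw [Real.norm_eq_abs, abs_mul]
      calc |F' (x k ω) i| * |F' (x k ω) i| ≤ ‖F' (x k ω)‖ * ‖F' (x k ω)‖ :=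
            mul_le_mul (coord_abs_le_norm _ i) (coord_abs_le_norm _ i)
              (abs_nonneg _) (norm_nonneg _)
        _ = ‖F' (x k ω)‖ ^ 2 := (sq _).symm
    have hinner_eq : ∀ ω, ⟪F' (x k ω), g k ω⟫ = ∑ i, F' (x k ω) i * g k ω i := by
      intro ω
      simp [PiLp.inner_apply, RCLike.inner_apply, conj_trivial, mul_comm]
    have hsq_eq : ∀ ω, ‖F' (x k ω)‖ ^ 2 = ∑ i, F' (x k ω) i * F' (x k ω) i := by
      intro ω
      rw [← real_inner_self_eq_norm_sq, PiLp.inner_apply]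
      simp only [RCLike.inner_apply, conj_trivial]
    rw [hI, hA]
    calc ∫ ω, ⟪F' (x k ω), g k ω⟫ ∂μ = ∫ ω, ∑ i, F' (x k ω) i * g k ω i ∂μ := by
          simp_rw [hinner_eq]
      _ = ∑ i, ∫ ω, F' (x k ω) i * g k ω i ∂μ :=
          integral_finset_sum _ (fun i _ => hprod_int i)
      _ = ∑ i, ∫ ω, F' (x k ω) i * F' (x k ω) i ∂μ := by
          refine Finset.sum_congr rfl (fun i _ => ?_)
          have hpull := condExp_mul_of_stronglyMeasurable_left (μ := μ) (m := ℱ k)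
            (hcoordm i) (hprod_int i) (hgi_int i)
          have hpull' : μ[fun ω => F' (x k ω) i * g k ω i | ℱ k]
              =ᵐ[μ] fun ω => F' (x k ω) i * F' (x k ω) i := by
            refine hpull.trans ?_
            filter_upwards [hco k i] with ω hω
            simp only [Pi.mul_apply]
            rw [← hω]
          calc ∫ ω, F' (x k ω) i * g k ω i ∂μ
              = ∫ ω, (μ[fun ω' => F' (x k ω') i * g k ω' i | ℱ k]) ω ∂μ :=
                (integral_condExp (hm k)).symm
            _ = ∫ ω, F' (x k ω) i * F' (x k ω) i ∂μ := integral_congr_ae hpull'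
      _ = ∫ ω, ∑ i, F' (x k ω) i * F' (x k ω) i ∂μ :=
          (integral_finset_sum _ (fun i _ => hsqprod_int i)).symm
      _ = ∫ ω, ‖F' (x k ω)‖ ^ 2 ∂μ := by simp_rw [← hsq_eq]
  -- variance bound
  have hBA : ∀ k, B k ≤ M₂ * A k := by
    intro k
    have h1 : B k = ∫ ω, (μ[fun ω' => ‖g k ω'‖ ^ 2 | ℱ k]) ω ∂μ :=
      (integral_condExp (hm k)).symm
    rw [h1, hA, ← integral_const_mul]
    exact integral_mono_ae integrable_condExp ((hintgrad k).const_mul M₂) (hvar k)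
  have hA0 : ∀ k, 0 ≤ A k := fun k => integral_nonneg (fun ω => by positivity)
  have hB0 : ∀ k, 0 ≤ B k := fun k => integral_nonneg (fun ω => by positivity)
  have hC0 : ∀ k, 0 ≤ C k := fun k => integral_nonneg (fun ω => by positivity)
  have hIC : ∀ k, I k ≤ C k := fun k =>
    integral_mono (hinner_int k) (hnormmul_int k) (fun ω => real_inner_le_norm _ _)
  -- Young bound
  have hCA : ∀ k, C k ≤ Real.sqrt M₂ * A k := by
    intro k
    set s := Real.sqrt M₂ with hs
    have hs0 : 0 < s := Real.sqrt_pos.2 hM₂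
    have hs2 : s ^ 2 = M₂ := Real.sq_sqrt hM₂.le
    have hptwise : ∀ ω, ‖F' (x k ω)‖ * ‖g k ω‖ ≤
        (s * ‖F' (x k ω)‖ ^ 2 + ‖g k ω‖ ^ 2 / s) / 2 := by
      intro ω
      have he : (s * ‖F' (x k ω)‖ ^ 2 + ‖g k ω‖ ^ 2 / s) / 2
          = (s ^ 2 * ‖F' (x k ω)‖ ^ 2 + ‖g k ω‖ ^ 2) / (2 * s) := by
        field_simp
      rw [he, le_div_iff₀ (by positivity)]
      nlinarith [sq_nonneg (s * ‖F' (x k ω)‖ - ‖g k ω‖)]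
    have h1 : C k ≤ ∫ ω, (s * ‖F' (x k ω)‖ ^ 2 + ‖g k ω‖ ^ 2 / s) / 2 ∂μ := by
      refine integral_mono (hnormmul_int k) ?_ hptwise
      exact (((hintgrad k).const_mul s).add ((hint2 k).div_const s)).div_const 2
    have h2 : ∫ ω, (s * ‖F' (x k ω)‖ ^ 2 + ‖g k ω‖ ^ 2 / s) / 2 ∂μ
        = (s * A k + B k / s) / 2 := by
      rw [hA, hB, ← integral_const_mul, ← integral_div, ← integral_add
        ((hintgrad k).const_mul s) ((hint2 k).div_const s), ← integral_div]
    have h3 : B k / s ≤ s * A k := by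
      rw [div_le_iff₀ hs0]
      calc B k ≤ M₂ * A k := hBA k
        _ = s * A k * s := by rw [← hs2]; ring
    rw [h2] at h1
    linarith
  -- per-step descent in expectation
  have hkstep : ∀ k, Φ (k+1) ≤ Φ k + (-(γ₂ * α) * I k + ((γ₁ - γ₂) * α) * C k
      + (L / 2 * (γ₁ * α) ^ 2) * B k) := by
    intro k
    have hpt : ∀ ω, F (x (k+1) ω) ≤ F (x k ω) + (-(γ₂ * α) * ⟪F' (x k ω), g k ω⟫
        + ((γ₁ - γ₂) * α) * (‖F' (x k ω)‖ * ‖g k ω‖)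
        + (L / 2 * (γ₁ * α) ^ 2) * ‖g k ω‖ ^ 2) := by
      intro ω
      rw [hstep k ω]
      refine (descent F F' L hL.le hgrad hlip (x k ω) _).trans ?_
      have hkey : ⟪F' (x k ω), (if ‖g k ω‖ < 1 / γ₁ then (-(γ₁ * α)) • g k ω
          else if ‖g k ω‖ ≤ 1 / γ₂ then (-(α / ‖g k ω‖)) • g k ω
          else (-(γ₂ * α)) • g k ω)⟫ + L / 2 * ‖(if ‖g k ω‖ < 1 / γ₁ then (-(γ₁ * α)) • g k ω
          else if ‖g k ω‖ ≤ 1 / γ₂ then (-(α / ‖g k ω‖)) • g k ω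
          else (-(γ₂ * α)) • g k ω)‖ ^ 2 ≤
          -(γ₂ * α) * ⟪F' (x k ω), g k ω⟫
          + ((γ₁ - γ₂) * α) * (‖F' (x k ω)‖ * ‖g k ω‖)
          + (L / 2 * (γ₁ * α) ^ 2) * ‖g k ω‖ ^ 2 := by
        split_ifs with h1 h2
        · exact ineq_step _ _ L α γ₁ γ₂ (γ₁ * α) hL.le hα hγ₂ hγ
            (by nlinarith) le_rfl
        · push_neg at h1
          have hg0 : 0 < ‖g k ω‖ := lt_of_lt_of_le (by positivity) h1
          refine ineq_step _ _ L α γ₁ γ₂ (α / ‖g k ω‖) hL.le hα hγ₂ hγ ?_ ?_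
          · rw [le_div_iff₀ hg0]
            calc γ₂ * α * ‖g k ω‖ ≤ γ₂ * α * (1 / γ₂) := by
                  apply mul_le_mul_of_nonneg_left h2 (by positivity)
              _ = α := by field_simp
          · rw [div_le_iff₀ hg0]
            calc α = γ₁ * α * (1 / γ₁) := by field_simp
              _ ≤ γ₁ * α * ‖g k ω‖ := by
                  apply mul_le_mul_of_nonneg_left h1 (by positivity)
        · exact ineq_step _ _ L α γ₁ γ₂ (γ₂ * α) hL.le hα hγ₂ hγ le_rfl
            (by nlinarith)
      linarith
    have hrhs_int : Integrable (fun ω => F (x k ω) + (-(γ₂ * α) * ⟪F' (x k ω), g k ω⟫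
        + ((γ₁ - γ₂) * α) * (‖F' (x k ω)‖ * ‖g k ω‖)
        + (L / 2 * (γ₁ * α) ^ 2) * ‖g k ω‖ ^ 2)) μ :=
      (hintF k).add ((((hinner_int k).const_mul _).add
        ((hnormmul_int k).const_mul _)).add ((hint2 k).const_mul _))
    have h1 : Φ (k+1) ≤ ∫ ω, (F (x k ω) + (-(γ₂ * α) * ⟪F' (x k ω), g k ω⟫
        + ((γ₁ - γ₂) * α) * (‖F' (x k ω)‖ * ‖g k ω‖)
        + (L / 2 * (γ₁ * α) ^ 2) * ‖g k ω‖ ^ 2)) ∂μ :=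
      integral_mono (hintF (k+1)) hrhs_int hpt
    have i1 : Integrable (fun ω => -(γ₂ * α) * ⟪F' (x k ω), g k ω⟫) μ :=
      (hinner_int k).const_mul _
    have i2 : Integrable (fun ω => ((γ₁ - γ₂) * α) * (‖F' (x k ω)‖ * ‖g k ω‖)) μ :=
      (hnormmul_int k).const_mul _
    have i3 : Integrable (fun ω => (L / 2 * (γ₁ * α) ^ 2) * ‖g k ω‖ ^ 2) μ :=
      (hint2 k).const_mul _
    have i12 : Integrable (fun ω => -(γ₂ * α) * ⟪F' (x k ω), g k ω⟫
        + ((γ₁ - γ₂) * α) * (‖F' (x k ω)‖ * ‖g k ω‖)) μ := by exact i1.add i2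
    have i123 : Integrable (fun ω => -(γ₂ * α) * ⟪F' (x k ω), g k ω⟫
        + ((γ₁ - γ₂) * α) * (‖F' (x k ω)‖ * ‖g k ω‖)
        + (L / 2 * (γ₁ * α) ^ 2) * ‖g k ω‖ ^ 2) μ := by exact i12.add i3
    have h2 : ∫ ω, (F (x k ω) + (-(γ₂ * α) * ⟪F' (x k ω), g k ω⟫
        + ((γ₁ - γ₂) * α) * (‖F' (x k ω)‖ * ‖g k ω‖)
        + (L / 2 * (γ₁ * α) ^ 2) * ‖g k ω‖ ^ 2)) ∂μ
        = Φ k + (-(γ₂ * α) * I k + ((γ₁ - γ₂) * α) * C k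
        + (L / 2 * (γ₁ * α) ^ 2) * B k) := by
      rw [integral_add (hintF k) i123, integral_add i12 i3,
        integral_add i1 i2, integral_const_mul, integral_const_mul, integral_const_mul]
    rw [h2] at h1
    exact h1
  -- key per-step inequality
  have hΦstep : ∀ k, Φ (k+1) + (α * γ₁ ^ 2 / (4 * γ₂)) * A k ≤ Φ k := by
    intro k
    set s := Real.sqrt M₂ with hs
    have hs0 : 0 < s := Real.sqrt_pos.2 hM₂
    have hs2 : s ^ 2 = M₂ := Real.sq_sqrt hM₂.le
    by_cases hM1 : 1 ≤ M₂
    · have hs1 : 1 ≤ s := by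
        rw [hs]
        exact Real.one_le_sqrt.2 hM1
      have e1 : (1 - 1 / (4 * M₂)) * γ₁ ^ 2 < γ₂ ^ 2 := by
        rw [div_pow] at hratio
        exact (lt_div_iff₀ (by positivity)).1 hratio
      have e1' : 4 * M₂ * γ₁ ^ 2 - γ₁ ^ 2 < 4 * M₂ * γ₂ ^ 2 := by
        have h4 : (0:ℝ) < 4 * M₂ := by positivity
        have := mul_lt_mul_of_pos_left e1 h4
        have hx : 4 * M₂ * ((1 - 1 / (4 * M₂)) * γ₁ ^ 2) = 4 * M₂ * γ₁ ^ 2 - γ₁ ^ 2 := by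
          field_simp
        linarith [hx ▸ this]
      have e2 : α * (4 * γ₂ * L * M₂) < 1 := by
        rw [lt_div_iff₀ (by positivity)] at hαlt
        exact hαlt
      have p1 : (γ₁ - γ₂) * s * (4 * (γ₁ + γ₂)) < γ₁ ^ 2 := by
        have hss : s ≤ s ^ 2 := by nlinarith
        have hgg : 0 ≤ (γ₁ - γ₂) * (γ₁ + γ₂) := by nlinarith
        have : (γ₁ - γ₂) * s * (4 * (γ₁ + γ₂)) ≤ 4 * s ^ 2 * ((γ₁ - γ₂) * (γ₁ + γ₂)) := by
          nlinarith
        have h2 : 4 * s ^ 2 * ((γ₁ - γ₂) * (γ₁ + γ₂)) < γ₁ ^ 2 := by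
          rw [hs2]; nlinarith [e1']
        linarith
      have p2 : L / 2 * γ₁ ^ 2 * α * M₂ * (8 * γ₂) < γ₁ ^ 2 := by
        have hγ₁2 : (0:ℝ) < γ₁ ^ 2 := by positivity
        nlinarith [mul_lt_mul_of_pos_left e2 hγ₁2]
      have e3 : 3 * γ₁ ^ 2 ≤ 4 * γ₂ ^ 2 := by nlinarith [e1']
      have hcoef : γ₁ ^ 2 ≤ (γ₂ - (γ₁ - γ₂) * s - L / 2 * γ₁ ^ 2 * α * M₂) * (4 * γ₂) := by
        nlinarith [mul_lt_mul_of_pos_left p1 hγ₂,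
          mul_lt_mul_of_pos_left p2 (by positivity : (0:ℝ) < γ₁ + γ₂),
          mul_pos hγ₂ hγ₁, sq_nonneg (γ₁ - γ₂)]
      have hstep2 : Φ (k+1) ≤ Φ k + α * (-(γ₂) + (γ₁ - γ₂) * s + L / 2 * γ₁ ^ 2 * α * M₂) * A k := by
        have h := hkstep k
        rw [htower k] at h
        have hCA' := hCA k
        have hBA' := hBA k
        have hc2 : (0:ℝ) ≤ (γ₁ - γ₂) * α := by nlinarith
        have hc3 : (0:ℝ) ≤ L / 2 * (γ₁ * α) ^ 2 := by positivity
        nlinarith [mul_le_mul_of_nonneg_left hCA' hc2, mul_le_mul_of_nonneg_left hBA' hc3]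
      have hfinal : α * (-(γ₂) + (γ₁ - γ₂) * s + L / 2 * γ₁ ^ 2 * α * M₂) * A k
          ≤ -(α * γ₁ ^ 2 / (4 * γ₂)) * A k := by
        apply mul_le_mul_of_nonneg_right _ (hA0 k)
        have h4γ₂ : (0:ℝ) < 4 * γ₂ := by positivity
        rw [← sub_nonneg]
        have : -(α * γ₁ ^ 2 / (4 * γ₂)) - α * (-(γ₂) + (γ₁ - γ₂) * s + L / 2 * γ₁ ^ 2 * α * M₂)
            = α * ((γ₂ - (γ₁ - γ₂) * s - L / 2 * γ₁ ^ 2 * α * M₂) - γ₁ ^ 2 / (4 * γ₂)) := by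
          ring
        rw [this]
        apply mul_nonneg hα.le
        rw [sub_nonneg, div_le_iff₀ h4γ₂]
        linarith [hcoef]
      linarith [hstep2, hfinal]
    · -- degenerate case M₂ < 1 : A k = 0
      push_neg at hM1
      have hs1 : s < 1 := by
        rw [hs, show (1:ℝ) = Real.sqrt 1 by simp]
        exact Real.sqrt_lt_sqrt hM₂.le hM1
      have hAk : A k = 0 := by
        have h0 : I k ≤ C k := hIC k
        rw [htower k] at h0
        have h1 : A k ≤ s * A k := h0.trans (hCA k)
        nlinarith [hA0 k]
      have hBk : B k = 0 := by
        have h := hBA k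
        rw [hAk, mul_zero] at h
        exact le_antisymm h (hB0 k)
      have hCk : C k = 0 := by
        have h := hCA k
        rw [hAk, mul_zero] at h
        exact le_antisymm h (hC0 k)
      have hIk : I k = 0 := by rw [htower k, hAk]
      have h := hkstep k
      rw [hIk, hBk, hCk] at h
      rw [hAk]
      simp only [mul_zero, add_zero, zero_add] at h ⊢
      linarith
  -- telescoping
  have htel : ∀ K : ℕ, Φ (K+1) + (α * γ₁ ^ 2 / (4 * γ₂)) * ∑ k ∈ Finset.Icc 1 K, A k ≤ Φ 1 := by
    intro K
    induction K with
    | zero => simp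
    | succ K ih =>
      rw [show K + 1 = K + 1 from rfl, Finset.sum_Icc_succ_top (Nat.le_add_left 1 K), mul_add]
      have := hΦstep (K+1)
      linarith
  have hΦlb : ∀ k, Fstar ≤ Φ k := by
    intro k
    have h := integral_mono (μ := μ) (integrable_const Fstar) (hintF k) (fun ω => hbdd _)
    simpa using h
  have hcpos : 0 < α * γ₁ ^ 2 / (4 * γ₂) := by positivity
  have hsum : ∀ K : ℕ, (α * γ₁ ^ 2 / (4 * γ₂)) * ∑ k ∈ Finset.Icc 1 K, A k ≤ Φ 1 - Fstar :=
    fun K => by linarith [htel K, hΦlb (K+1)]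
  have hmain : ∀ K : ℕ, (∫ ω, (1 / (K : ℝ)) * ∑ k ∈ Finset.Icc 1 K, ‖F' (x k ω)‖ ^ 2 ∂μ)
      = (1 / (K : ℝ)) * ∑ k ∈ Finset.Icc 1 K, A k := by
    intro K
    rw [integral_const_mul, integral_finset_sum _ (fun k _ => hintgrad k)]
  have hD0 : 0 ≤ Φ 1 - Fstar := by linarith [hΦlb 1]
  have part1 : ∀ K : ℕ, 1 ≤ K →
      (∫ ω, (1 / (K : ℝ)) * ∑ k ∈ Finset.Icc 1 K, ‖F' (x k ω)‖ ^ 2 ∂μ) ≤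
        4 * γ₂ * (Φ 1 - Fstar) / ((K : ℝ) * α * γ₁ ^ 2) := by
    intro K hK
    have hKpos : (0:ℝ) < K := by exact_mod_cast hK
    rw [hmain K]
    have hS : ∑ k ∈ Finset.Icc 1 K, A k ≤ 4 * γ₂ * (Φ 1 - Fstar) / (α * γ₁ ^ 2) := by
      have h4 : (0:ℝ) < 4 * γ₂ := by positivity
      have h := mul_le_mul_of_nonneg_left (hsum K) h4.le
      have he : 4 * γ₂ * (α * γ₁ ^ 2 / (4 * γ₂) * ∑ k ∈ Finset.Icc 1 K, A k)
          = α * γ₁ ^ 2 * ∑ k ∈ Finset.Icc 1 K, A k := by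
        field_simp
      rw [le_div_iff₀ (by positivity : (0:ℝ) < α * γ₁ ^ 2)]
      nlinarith [h, he]
    calc (1 / (K : ℝ)) * ∑ k ∈ Finset.Icc 1 K, A k
        ≤ (1 / (K : ℝ)) * (4 * γ₂ * (Φ 1 - Fstar) / (α * γ₁ ^ 2)) := by
          apply mul_le_mul_of_nonneg_left hS (by positivity)
      _ = 4 * γ₂ * (Φ 1 - Fstar) / ((K : ℝ) * α * γ₁ ^ 2) := by
          ring
  refine ⟨part1, ?_⟩
  -- tendsto
  have hub : ∀ K : ℕ, (∫ ω, (1 / (K : ℝ)) * ∑ k ∈ Finset.Icc 1 K, ‖F' (x k ω)‖ ^ 2 ∂μ)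
      ≤ (4 * γ₂ * (Φ 1 - Fstar) / (α * γ₁ ^ 2)) / (K : ℝ) := by
    intro K
    rcases Nat.eq_zero_or_pos K with h0 | hK
    · subst h0
      simp [hmain 0]
    · refine (part1 K hK).trans (le_of_eq ?_)
      ring
  have hlb : ∀ K : ℕ, 0 ≤ (∫ ω, (1 / (K : ℝ)) * ∑ k ∈ Finset.Icc 1 K, ‖F' (x k ω)‖ ^ 2 ∂μ) := by
    intro K
    rw [hmain K]
    exact mul_nonneg (by positivity) (Finset.sum_nonneg (fun k _ => hA0 k))
  refine squeeze_zero hlb hub ?_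
  exact tendsto_const_div_atTop_nhds_zero_nat _
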